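/- Let K = k[[ℏ]] with k a field of characteristic 0, and let (A, B, i, p) be a split pair of Hopf algebras over K with invertible antipode such that the image of Δ − (1 2)∘Δ is contained in ℏ·(B ⊗ B). Let L = Π(B) with coaction π_L*(x) = Σ x₍₃₎ · S⁻¹(x₍₁₎) ⊗ x₍₂₎ for x ∈ L. Then for every x ∈ L, ((id − ι∘ε) ⊗ id)(π_L*(x)) ∈ ℏ·(B ⊗ B); hence (by the admissibility criterion) the coaction on L factors through B′ ⊗ L, i.e. L is an admissible Drinfeld–Yetter B-module. -/

import Mathlib

open TensorProduct

noncomputable section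

section PowersInfra

/-- A bundled module over `K`, used to form iterated tensor powers of `B`. -/
structure ModuleBundle (K : Type) [CommRing K] : Type 1 where
  carrier : Type
  [acg : AddCommGroup carrier]
  [mod : Module K carrier]

attribute [instance] ModuleBundle.acg ModuleBundle.mod

variable (K : Type) [CommRing K] (B : Type) [Ring B] [HopfAlgebra K B]

/-- The iterated (right-nested) tensor power `Tn K B n ≅ B^{⊗(n+1)}`. -/
def Tn : ℕ → ModuleBundle K
  | 0 => ⟨B⟩
  | n + 1 => ⟨B ⊗[K] (Tn n).carrier⟩

/-- The iterated comultiplication `Δ⁽ⁿ⁺¹⁾ : B → B^{⊗(n+1)}`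
(`Δ⁽¹⁾ = id`, `Δ⁽ⁿ⁺²⁾ = (id ⊗ Δ⁽ⁿ⁺¹⁾) ∘ Δ`). -/
def DeltaIter : (n : ℕ) → B →ₗ[K] (Tn K B n).carrier
  | 0 => LinearMap.id
  | n + 1 => LinearMap.lTensor B (DeltaIter n) ∘ₗ (Coalgebra.comul : B →ₗ[K] B ⊗[K] B)

/-- `id − ι ∘ ε : B → B`. -/
def pProj : B →ₗ[K] B :=
  LinearMap.id - Algebra.linearMap K B ∘ₗ (Coalgebra.counit : B →ₗ[K] K)

/-- `(id − ι∘ε)^{⊗(n+1)}` on `B^{⊗(n+1)}`. -/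
def pProjIter : (n : ℕ) → (Tn K B n).carrier →ₗ[K] (Tn K B n).carrier
  | 0 => pProj K B
  | n + 1 => TensorProduct.map (pProj K B) (pProjIter n)

/-- `d⁽ⁿ⁺¹⁾ = (id − ι∘ε)^{⊗(n+1)} ∘ Δ⁽ⁿ⁺¹⁾ : B → B^{⊗(n+1)}`. -/
def dIter (n : ℕ) : B →ₗ[K] (Tn K B n).carrier := pProjIter K B n ∘ₗ DeltaIter K B n

end PowersInfra

section SplitPair

variable {K : Type} [CommRing K]
variable {A : Type} [Ring A] [HopfAlgebra K A]
variable {B : Type} [Ring B] [HopfAlgebra K B]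

/-- `π = i ∘ p : B → B`, for a split pair of Hopf algebras `(A, B, i, p)`. -/
def piMap (i : A →ₐc[K] B) (p : B →ₐc[K] A) : B →ₗ[K] B :=
  i.toLinearMap ∘ₗ p.toLinearMap

/-- `Π = m ∘ (id ⊗ (S ∘ π)) ∘ Δ : B → B`, i.e. `Π(b) = Σ b₍₁₎ · S(π(b₍₂₎))`. -/
def PiMap (i : A →ₐc[K] B) (p : B →ₐc[K] A) : B →ₗ[K] B :=
  LinearMap.mul' K B ∘ₗ
    TensorProduct.map LinearMap.id (HopfAlgebra.antipode K ∘ₗ piMap i p) ∘ₗ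
    (Coalgebra.comul : B →ₗ[K] B ⊗[K] B)

/-- The twice-iterated comultiplication `Δ⁽³⁾ = (Δ ⊗ id) ∘ Δ : B → (B ⊗ B) ⊗ B`. -/
def Delta3 : B →ₗ[K] (B ⊗[K] B) ⊗[K] B :=
  LinearMap.rTensor B (Coalgebra.comul : B →ₗ[K] B ⊗[K] B) ∘ₗ
    (Coalgebra.comul : B →ₗ[K] B ⊗[K] B)

/-- The coaction `π_L* : θ(x) = Σ x₍₃₎ · S⁻¹(x₍₁₎) ⊗ x₍₂₎` where `x = Π(b)` and
`Δ⁽³⁾(x) = Σ x₍₁₎ ⊗ x₍₂₎ ⊗ x₍₃₎`. -/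
def theta (i : A →ₐc[K] B) (p : B →ₐc[K] A) (S' : B →ₗ[K] B) : B →ₗ[K] B ⊗[K] B :=
  TensorProduct.map (LinearMap.mul' K B ∘ₗ LinearMap.lTensor B S') LinearMap.id ∘ₗ
  (TensorProduct.assoc K B B B).symm.toLinearMap ∘ₗ
  (TensorProduct.comm K (B ⊗[K] B) B).toLinearMap ∘ₗ
  Delta3 ∘ₗ PiMap i p

end SplitPair

namespace Stmt12Aux

variable {K : Type} [CommRing K]
variable {B : Type} [Ring B] [HopfAlgebra K B]

local notation "S" => (HopfAlgebra.antipode K : B →ₗ[K] B)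

/-! ### Generic repr helpers -/

section ReprHelpers

variable {C : Type} [AddCommGroup C] [Module K C] [Coalgebra K C]

lemma sum_counit_smul {x : C} {ι : Type*} (r : Coalgebra.Repr K x ι) :
    ∑ i ∈ r.index, Coalgebra.counit (R := K) (r.left i) • r.right i = x := by
  have h := congrArg (TensorProduct.lid K C) (Coalgebra.sum_counit_tmul_eq r)
  rw [map_sum] at h
  simp only [TensorProduct.lid_tmul] at h
  simpa using h

lemma sum_smul_counit {x : C} {ι : Type*} (r : Coalgebra.Repr K x ι) :
    ∑ i ∈ r.index, Coalgebra.counit (R := K) (r.right i) • r.left i = x := by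
  have h := congrArg (TensorProduct.rid K C) (Coalgebra.sum_tmul_counit_eq r)
  rw [map_sum] at h
  simp only [TensorProduct.rid_tmul] at h
  simpa using h

end ReprHelpers

/-! ### Convolution -/

section Conv

variable {C : Type} [AddCommGroup C] [Module K C] [Coalgebra K C]
variable {A' : Type} [Ring A'] [Algebra K A']

/-- Convolution product of two linear maps from a coalgebra to an algebra. -/
def conv (f g : C →ₗ[K] A') : C →ₗ[K] A' :=
  LinearMap.mul' K A' ∘ₗ TensorProduct.map f g ∘ₗ (Coalgebra.comul : C →ₗ[K] C ⊗[K] C)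

/-- The convolution unit. -/
def convOne : C →ₗ[K] A' :=
  Algebra.linearMap K A' ∘ₗ (Coalgebra.counit : C →ₗ[K] K)

lemma conv_apply (f g : C →ₗ[K] A') {x : C} {ι : Type*} (r : Coalgebra.Repr K x ι) :
    conv f g x = ∑ i ∈ r.index, f (r.left i) * g (r.right i) := by
  simp [conv, ← r.eq, map_sum]

lemma convOne_apply (x : C) : (convOne : C →ₗ[K] A') x
    = algebraMap K A' (Coalgebra.counit (R := K) x) := rfl

lemma conv_convOne_right (f : C →ₗ[K] A') : conv f convOne = f := by
  ext x
  have r := Coalgebra.Repr.arbitrary K x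
  calc conv f convOne x
      = ∑ i ∈ r.index, Coalgebra.counit (R := K) (r.right i) • f (r.left i) := by
        rw [conv_apply f convOne r]
        refine Finset.sum_congr rfl fun i _ => ?_
        rw [convOne_apply, ← Algebra.commutes, Algebra.smul_def]
    _ = f (∑ i ∈ r.index, Coalgebra.counit (R := K) (r.right i) • r.left i) := by
        rw [map_sum]; exact Finset.sum_congr rfl fun i _ => (map_smul f _ _).symm
    _ = f x := by rw [sum_smul_counit r]

lemma conv_convOne_left (f : C →ₗ[K] A') : conv convOne f = f := by
  ext x
  have r := Coalgebra.Repr.arbitrary K x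
  calc conv convOne f x
      = ∑ i ∈ r.index, Coalgebra.counit (R := K) (r.left i) • f (r.right i) := by
        rw [conv_apply convOne f r]
        refine Finset.sum_congr rfl fun i _ => ?_
        rw [convOne_apply, Algebra.smul_def]
    _ = f (∑ i ∈ r.index, Coalgebra.counit (R := K) (r.left i) • r.right i) := by
        rw [map_sum]; exact Finset.sum_congr rfl fun i _ => (map_smul f _ _).symm
    _ = f x := by rw [sum_counit_smul r]

lemma conv_assoc (f g h : C →ₗ[K] A') : conv (conv f g) h = conv f (conv g h) := by
  ext x
  have r := Coalgebra.Repr.arbitrary K x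
  have a₁ : ∀ i, Coalgebra.Repr K (r.left i) (C × C) := fun i => Coalgebra.Repr.arbitrary K _
  have a₂ : ∀ i, Coalgebra.Repr K (r.right i) (C × C) := fun i => Coalgebra.Repr.arbitrary K _
  have key := Coalgebra.sum_tmul_tmul_eq r a₁ a₂
  have key2 := congrArg (TensorProduct.map f (TensorProduct.map g h)) key
  have key3 := congrArg (LinearMap.mul' K A' ∘ₗ LinearMap.lTensor A' (LinearMap.mul' K A')) key2
  simp only [map_sum, TensorProduct.map_tmul, LinearMap.comp_apply, LinearMap.lTensor_tmul,
    LinearMap.mul'_apply] at key3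
  rw [conv_apply (conv f g) h r, conv_apply f (conv g h) r]
  calc ∑ i ∈ r.index, conv f g (r.left i) * h (r.right i)
      = ∑ i ∈ r.index, ∑ j ∈ (a₁ i).index,
          f ((a₁ i).left j) * (g ((a₁ i).right j) * h (r.right i)) := by
        refine Finset.sum_congr rfl fun i _ => ?_
        rw [conv_apply f g (a₁ i), Finset.sum_mul]
        exact Finset.sum_congr rfl fun j _ => mul_assoc _ _ _
    _ = ∑ i ∈ r.index, ∑ j ∈ (a₂ i).index,
          f (r.left i) * (g ((a₂ i).left j) * h ((a₂ i).right j)) := key3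
    _ = ∑ i ∈ r.index, f (r.left i) * conv g h (r.right i) := by
        refine Finset.sum_congr rfl fun i _ => ?_
        rw [conv_apply g h (a₂ i), Finset.mul_sum]

lemma conv_unique (f g h : C →ₗ[K] A') (hfh : conv f h = convOne) (hhg : conv h g = convOne) :
    f = g := by
  have h1 : conv f (conv h g) = f := by rw [hhg, conv_convOne_right]
  have h2 : conv (conv f h) g = g := by rw [hfh, conv_convOne_left]
  rw [← h1, ← conv_assoc, h2]

end Conv


/-! ### Antipode properties -/

section Antipode

lemma antipode_one : S (1 : B) = 1 := by
  have h := HopfAlgebra.mul_antipode_rTensor_comul_apply (R := K) (A := B) 1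
  rw [Bialgebra.comul_one, Algebra.TensorProduct.one_def] at h
  simpa [Bialgebra.counit_one] using h

lemma map_mul'_ttc (u v : B ⊗[K] B) :
    TensorProduct.map (LinearMap.mul' K B) (LinearMap.mul' K B)
      (TensorProduct.tensorTensorTensorComm K B B B B (u ⊗ₜ[K] v)) = u * v := by
  induction u using TensorProduct.induction_on with
  | zero => simp [TensorProduct.zero_tmul]
  | tmul a b =>
    induction v using TensorProduct.induction_on with
    | zero => simp [TensorProduct.tmul_zero]
    | tmul c d => simp [Algebra.TensorProduct.tmul_mul_tmul]
    | add v₁ v₂ h₁ h₂ =>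
      rw [TensorProduct.tmul_add, map_add, map_add, h₁, h₂, mul_add]
  | add u₁ u₂ h₁ h₂ =>
    rw [TensorProduct.add_tmul, map_add, map_add, h₁, h₂, add_mul]

lemma comul_comp_mul' :
    (Coalgebra.comul : B →ₗ[K] B ⊗[K] B) ∘ₗ LinearMap.mul' K B
      = TensorProduct.map (LinearMap.mul' K B) (LinearMap.mul' K B) ∘ₗ
        (Coalgebra.comul : B ⊗[K] B →ₗ[K] (B ⊗[K] B) ⊗[K] (B ⊗[K] B)) := by
  apply TensorProduct.ext'
  intro x y
  simp only [LinearMap.comp_apply, LinearMap.mul'_apply]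
  rw [Bialgebra.comul_mul,
    show (Coalgebra.comul (R := K) (A := B ⊗[K] B))
      = (TensorProduct.tensorTensorTensorComm K B B B B).toLinearMap ∘ₗ
          TensorProduct.map Coalgebra.comul Coalgebra.comul from rfl]
  simp only [LinearMap.comp_apply, TensorProduct.map_tmul, LinearEquiv.coe_coe]
  rw [map_mul'_ttc]

lemma counit_comp_mul' :
    (Coalgebra.counit : B →ₗ[K] K) ∘ₗ LinearMap.mul' K B
      = (Coalgebra.counit : B ⊗[K] B →ₗ[K] K) := by
  apply TensorProduct.ext'
  intro x y
  simp only [LinearMap.comp_apply, LinearMap.mul'_apply]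
  rw [Bialgebra.counit_mul,
    show (Coalgebra.counit (R := K) (A := B ⊗[K] B))
      = LinearMap.mul' K K ∘ₗ TensorProduct.map Coalgebra.counit Coalgebra.counit from
        TensorProduct.ext' fun x y => by simp [TensorProduct.counit_tmul, mul_comm]]
  simp

section ConvComp

variable {C C' : Type} [AddCommGroup C] [Module K C] [Coalgebra K C]
  [AddCommGroup C'] [Module K C'] [Coalgebra K C']
variable {A' A'' : Type} [Ring A'] [Algebra K A'] [Ring A''] [Algebra K A'']

lemma conv_comp_coalg (f g : C →ₗ[K] A') (φ : C' →ₗ[K] C)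
    (hφ : (Coalgebra.comul : C →ₗ[K] C ⊗[K] C) ∘ₗ φ
        = TensorProduct.map φ φ ∘ₗ (Coalgebra.comul : C' →ₗ[K] C' ⊗[K] C')) :
    conv (f ∘ₗ φ) (g ∘ₗ φ) = conv f g ∘ₗ φ := by
  ext x
  simp only [conv, LinearMap.comp_apply]
  rw [show (Coalgebra.comul (φ x)) = TensorProduct.map φ φ (Coalgebra.comul x) from
    LinearMap.congr_fun hφ x, ← LinearMap.comp_apply (TensorProduct.map f g),
    ← TensorProduct.map_comp]

lemma algHom_comp_conv (ψ : A' →ₐ[K] A'') (f g : C →ₗ[K] A') :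
    ψ.toLinearMap ∘ₗ conv f g = conv (ψ.toLinearMap ∘ₗ f) (ψ.toLinearMap ∘ₗ g) := by
  ext x
  have r := Coalgebra.Repr.arbitrary K x
  rw [LinearMap.comp_apply, conv_apply f g r, conv_apply _ _ r, map_sum]
  exact Finset.sum_congr rfl fun i _ => by simp

end ConvComp

lemma conv_antipode_id : conv S LinearMap.id = (convOne : B →ₗ[K] B) := by
  have h := HopfAlgebra.mul_antipode_rTensor_comul (R := K) (A := B)
  unfold conv convOne
  rw [← h]
  rfl

lemma conv_id_antipode : conv LinearMap.id S = (convOne : B →ₗ[K] B) := by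
  have h := HopfAlgebra.mul_antipode_lTensor_comul (R := K) (A := B)
  unfold conv convOne
  rw [← h]
  rfl

lemma counit_tmul (x y : B) :
    Coalgebra.counit (R := K) (x ⊗ₜ[K] y)
      = Coalgebra.counit (R := K) x * Coalgebra.counit (R := K) y := by
  rw [show (Coalgebra.counit (R := K) (A := B ⊗[K] B))
      = LinearMap.mul' K K ∘ₗ TensorProduct.map Coalgebra.counit Coalgebra.counit from
        TensorProduct.ext' fun x y => by simp [TensorProduct.counit_tmul, mul_comm]]
  simp

lemma comul_tmul_sum (x y : B) {ι ι' : Type*} (rx : Coalgebra.Repr K x ι) (ry : Coalgebra.Repr K y ι') :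
    Coalgebra.comul (R := K) (x ⊗ₜ[K] y)
      = ∑ i ∈ rx.index, ∑ j ∈ ry.index,
          (rx.left i ⊗ₜ[K] ry.left j) ⊗ₜ[K] (rx.right i ⊗ₜ[K] ry.right j) := by
  rw [show (Coalgebra.comul (R := K) (A := B ⊗[K] B))
      = (TensorProduct.tensorTensorTensorComm K B B B B).toLinearMap ∘ₗ
          TensorProduct.map Coalgebra.comul Coalgebra.comul from rfl]
  simp only [LinearMap.comp_apply, TensorProduct.map_tmul, LinearEquiv.coe_coe, ← rx.eq, ← ry.eq]
  rw [TensorProduct.sum_tmul, map_sum]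
  refine Finset.sum_congr rfl fun i _ => ?_
  rw [TensorProduct.tmul_sum, map_sum]
  exact Finset.sum_congr rfl fun j _ => TensorProduct.tensorTensorTensorComm_tmul ..

lemma antipode_mul (a b : B) : S (a * b) = S b * S a := by
  have key : (S ∘ₗ LinearMap.mul' K B)
      = LinearMap.mul' K B ∘ₗ TensorProduct.map S S ∘ₗ (TensorProduct.comm K B B).toLinearMap := by
    apply conv_unique (h := LinearMap.mul' K B)
    · -- conv (S ∘ mul') mul' = convOne
      have h1 : conv (S ∘ₗ LinearMap.mul' K B) (LinearMap.id ∘ₗ LinearMap.mul' K B)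
          = conv S LinearMap.id ∘ₗ LinearMap.mul' K B :=
        conv_comp_coalg S LinearMap.id (LinearMap.mul' K B) comul_comp_mul'
      rw [LinearMap.id_comp] at h1
      rw [h1, conv_antipode_id]
      unfold convOne
      rw [LinearMap.comp_assoc, counit_comp_mul']
    · -- conv mul' (mul' ∘ map S S ∘ comm) = convOne
      apply TensorProduct.ext'
      intro x y
      have rx := Coalgebra.Repr.arbitrary K x
      have ry := Coalgebra.Repr.arbitrary K y
      have hcount : (convOne : B ⊗[K] B →ₗ[K] B) (x ⊗ₜ[K] y)
          = algebraMap K B (Coalgebra.counit (R := K) x * Coalgebra.counit (R := K) y) := by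
        rw [convOne_apply, counit_tmul]
      rw [hcount]
      have expand : conv (LinearMap.mul' K B)
          (LinearMap.mul' K B ∘ₗ TensorProduct.map S S ∘ₗ (TensorProduct.comm K B B).toLinearMap)
          (x ⊗ₜ[K] y)
          = ∑ i ∈ rx.index, ∑ j ∈ ry.index,
              (rx.left i * ry.left j) * (S (ry.right j) * S (rx.right i)) := by
        unfold conv
        simp only [LinearMap.comp_apply]
        rw [comul_tmul_sum x y rx ry]
        simp [map_sum]
      rw [expand]
      have step : ∀ i ∈ rx.index, ∑ j ∈ ry.index,
          (rx.left i * ry.left j) * (S (ry.right j) * S (rx.right i))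
          = Coalgebra.counit (R := K) y • (rx.left i * S (rx.right i)) := by
        intro i _
        have : ∀ j, (rx.left i * ry.left j) * (S (ry.right j) * S (rx.right i))
            = rx.left i * ((ry.left j * S (ry.right j)) * S (rx.right i)) := by
          intro j; rw [mul_assoc, ← mul_assoc (ry.left j)]
        rw [Finset.sum_congr rfl fun j _ => this j, ← Finset.mul_sum, ← Finset.sum_mul,
          HopfAlgebra.sum_mul_antipode_eq_algebraMap_counit ry, ← Algebra.smul_def, mul_smul_comm]
      rw [Finset.sum_congr rfl step, ← Finset.smul_sum, HopfAlgebra.sum_mul_antipode_eq_algebraMap_counit rx,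
        Algebra.smul_def, ← map_mul, mul_comm]
  have := congrArg (fun f => f (a ⊗ₜ[K] b)) key
  simpa using this

end Antipode


/-! ### Anti-comultiplicativity of the antipode -/

section ComulAntipode

/-- Helper pattern map: `a ⊗ (b ⊗ c) ↦ (S b ⊗ S a) * comul c`. -/
def gammaMap : B ⊗[K] (B ⊗[K] B) →ₗ[K] B ⊗[K] B :=
  LinearMap.mul' K (B ⊗[K] B) ∘ₗ
    TensorProduct.map ((TensorProduct.comm K B B).toLinearMap ∘ₗ TensorProduct.map S S)
      (Coalgebra.comul) ∘ₗ
    (TensorProduct.assoc K B B B).symm.toLinearMap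

@[simp] lemma gammaMap_tmul (a b c : B) :
    (gammaMap : B ⊗[K] (B ⊗[K] B) →ₗ[K] B ⊗[K] B) (a ⊗ₜ[K] (b ⊗ₜ[K] c))
      = (S b ⊗ₜ[K] S a) * Coalgebra.comul (R := K) c := by
  simp [gammaMap]

/-- Helper pattern map: `a ⊗ (b ⊗ c) ↦ (S a * b) ⊗ (w * c)`. -/
def gamma2Map (w : B) : B ⊗[K] (B ⊗[K] B) →ₗ[K] B ⊗[K] B :=
  TensorProduct.map (LinearMap.mul' K B ∘ₗ LinearMap.rTensor B S) (LinearMap.mulLeft K w) ∘ₗ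
    (TensorProduct.assoc K B B B).symm.toLinearMap

@[simp] lemma gamma2Map_tmul (w a b c : B) :
    (gamma2Map w : B ⊗[K] (B ⊗[K] B) →ₗ[K] B ⊗[K] B) (a ⊗ₜ[K] (b ⊗ₜ[K] c))
      = (S a * b) ⊗ₜ[K] (w * c) := by
  simp [gamma2Map]

lemma comul_antipode :
    (Coalgebra.comul : B →ₗ[K] B ⊗[K] B) ∘ₗ S
      = (TensorProduct.comm K B B).toLinearMap ∘ₗ TensorProduct.map S S ∘ₗ Coalgebra.comul := by
  refine (conv_unique
    ((TensorProduct.comm K B B).toLinearMap ∘ₗ TensorProduct.map S S ∘ₗ Coalgebra.comul)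
    ((Coalgebra.comul : B →ₗ[K] B ⊗[K] B) ∘ₗ S)
    (Coalgebra.comul : B →ₗ[K] B ⊗[K] B) ?_ ?_).symm
  · -- conv (comm ∘ map S S ∘ comul) comul = convOne
    ext x
    have r := Coalgebra.Repr.arbitrary K x
    have li : ∀ i, Coalgebra.Repr K (r.left i) (B × B) := fun i => Coalgebra.Repr.arbitrary K _
    have ri : ∀ i, Coalgebra.Repr K (r.right i) (B × B) := fun i => Coalgebra.Repr.arbitrary K _
    rw [conv_apply _ _ r]
    have stepB : ∀ i ∈ r.index,
        ((TensorProduct.comm K B B).toLinearMap ∘ₗ TensorProduct.map S S ∘ₗ Coalgebra.comul)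
            (r.left i) * Coalgebra.comul (R := K) (r.right i)
        = ∑ j ∈ (li i).index,
            gammaMap ((li i).left j ⊗ₜ[K] ((li i).right j ⊗ₜ[K] r.right i)) := by
      intro i _
      simp only [LinearMap.comp_apply, ← (li i).eq, map_sum, TensorProduct.map_tmul,
        LinearEquiv.coe_coe, TensorProduct.comm_tmul, gammaMap_tmul]
      rw [Finset.sum_mul]
    rw [Finset.sum_congr rfl stepB]
    have key := congrArg (gammaMap (K := K) (B := B)) (Coalgebra.sum_tmul_tmul_eq r li ri)
    simp only [map_sum] at key
    rw [key]
    have stepD : ∀ i ∈ r.index,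
        ∑ j ∈ (ri i).index,
            gammaMap (r.left i ⊗ₜ[K] ((ri i).left j ⊗ₜ[K] (ri i).right j))
        = (1 : B) ⊗ₜ[K] (S (r.left i) * r.right i) := by
      intro i _
      have qik : ∀ k, Coalgebra.Repr K ((ri i).left k) (B × B) := fun k => Coalgebra.Repr.arbitrary K _
      have rrik : ∀ k, Coalgebra.Repr K ((ri i).right k) (B × B) := fun k => Coalgebra.Repr.arbitrary K _
      have e1 : ∀ k ∈ (ri i).index,
          gammaMap (r.left i ⊗ₜ[K] ((ri i).left k ⊗ₜ[K] (ri i).right k))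
          = ∑ m ∈ (rrik k).index, gamma2Map (S (r.left i))
              ((ri i).left k ⊗ₜ[K] ((rrik k).left m ⊗ₜ[K] (rrik k).right m)) := by
        intro k _
        rw [gammaMap_tmul, ← (rrik k).eq, Finset.mul_sum]
        exact Finset.sum_congr rfl fun m _ => by
          rw [Algebra.TensorProduct.tmul_mul_tmul, gamma2Map_tmul]
      rw [Finset.sum_congr rfl e1]
      have key2 := congrArg (gamma2Map (K := K) (B := B) (S (r.left i)))
        (Coalgebra.sum_tmul_tmul_eq (ri i) qik rrik)
      simp only [map_sum] at key2
      rw [← key2]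
      have e2 : ∀ k ∈ (ri i).index,
          ∑ j ∈ (qik k).index, gamma2Map (S (r.left i))
              ((qik k).left j ⊗ₜ[K] ((qik k).right j ⊗ₜ[K] (ri i).right k))
          = Coalgebra.counit (R := K) ((ri i).left k) •
              ((1 : B) ⊗ₜ[K] (S (r.left i) * (ri i).right k)) := by
        intro k _
        simp only [gamma2Map_tmul]
        rw [← TensorProduct.sum_tmul, HopfAlgebra.sum_antipode_mul_eq_algebraMap_counit (qik k),
          Algebra.algebraMap_eq_smul_one, TensorProduct.smul_tmul']
      rw [Finset.sum_congr rfl e2]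
      have e3 : ∀ k ∈ (ri i).index,
          Coalgebra.counit (R := K) ((ri i).left k) •
              ((1 : B) ⊗ₜ[K] (S (r.left i) * (ri i).right k))
          = (1 : B) ⊗ₜ[K] (S (r.left i) * (Coalgebra.counit (R := K) ((ri i).left k)
              • (ri i).right k)) := by
        intro k _
        rw [mul_smul_comm, TensorProduct.tmul_smul]
      rw [Finset.sum_congr rfl e3, ← TensorProduct.tmul_sum, ← Finset.mul_sum,
        sum_counit_smul (ri i)]
    rw [Finset.sum_congr rfl stepD, ← TensorProduct.tmul_sum,
      HopfAlgebra.sum_antipode_mul_eq_algebraMap_counit r, convOne_apply,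
      Algebra.algebraMap_eq_smul_one, Algebra.algebraMap_eq_smul_one,
      TensorProduct.tmul_smul]
    rw [show ((1:B) ⊗ₜ[K] (1:B)) = (1 : B ⊗[K] B) from Algebra.TensorProduct.one_def.symm]
  · -- conv comul (comul ∘ S) = convOne
    have h1 : (Bialgebra.comulAlgHom K B).toLinearMap ∘ₗ conv LinearMap.id S
        = conv ((Bialgebra.comulAlgHom K B).toLinearMap ∘ₗ LinearMap.id)
            ((Bialgebra.comulAlgHom K B).toLinearMap ∘ₗ S) :=
      algHom_comp_conv (Bialgebra.comulAlgHom K B) LinearMap.id S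
    rw [conv_id_antipode] at h1
    have h2 : (Bialgebra.comulAlgHom K B).toLinearMap ∘ₗ LinearMap.id
        = (Coalgebra.comul : B →ₗ[K] B ⊗[K] B) := by rfl
    have h3 : (Bialgebra.comulAlgHom K B).toLinearMap ∘ₗ (S : B →ₗ[K] B)
        = (Coalgebra.comul : B →ₗ[K] B ⊗[K] B) ∘ₗ S := by rfl
    rw [h2, h3] at h1
    rw [← h1]
    ext x
    simp [convOne]

end ComulAntipode


/-! ### The inverse antipode -/

section InvAntipode

variable (S' : B →ₗ[K] B)
variable (hS'1 : S' ∘ₗ (HopfAlgebra.antipode K : B →ₗ[K] B) = LinearMap.id)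
variable (hS'2 : (HopfAlgebra.antipode K : B →ₗ[K] B) ∘ₗ S' = LinearMap.id)

include hS'1 in
lemma S'_antipode_apply (b : B) : S' (S b) = b := by
  have := LinearMap.congr_fun hS'1 b
  simpa using this

include hS'2 in
lemma antipode_S'_apply (b : B) : S (S' b) = b := by
  have := LinearMap.congr_fun hS'2 b
  simpa using this

include hS'1 in
lemma S'_one : S' (1 : B) = 1 := by
  rw [show (1 : B) = S (1 : B) from antipode_one.symm, S'_antipode_apply S' hS'1,
    antipode_one]

include hS'1 hS'2 in
lemma K1r {z : B} {ι : Type*} (q : Coalgebra.Repr K z ι) :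
    ∑ j ∈ q.index, q.right j * S' (q.left j)
      = algebraMap K B (Coalgebra.counit (R := K) z) := by
  have hS : S (∑ j ∈ q.index, q.right j * S' (q.left j))
      = algebraMap K B (Coalgebra.counit (R := K) z) := by
    rw [map_sum]
    have : ∀ j ∈ q.index, S (q.right j * S' (q.left j)) = q.left j * S (q.right j) := by
      intro j _
      rw [antipode_mul, antipode_S'_apply S' hS'2]
    rw [Finset.sum_congr rfl this, HopfAlgebra.sum_mul_antipode_eq_algebraMap_counit q]
  calc ∑ j ∈ q.index, q.right j * S' (q.left j)
      = S' (S (∑ j ∈ q.index, q.right j * S' (q.left j))) := by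
        rw [S'_antipode_apply S' hS'1]
    _ = S' (algebraMap K B (Coalgebra.counit (R := K) z)) := by rw [hS]
    _ = algebraMap K B (Coalgebra.counit (R := K) z) := by
        rw [Algebra.algebraMap_eq_smul_one, map_smul, S'_one S' hS'1]

include hS'1 in
lemma comm_mapS'S'_comm_mapSS (t : B ⊗[K] B) :
    (TensorProduct.comm K B B) (TensorProduct.map S' S'
      ((TensorProduct.comm K B B) (TensorProduct.map S S t))) = t := by
  induction t using TensorProduct.induction_on with
  | zero => simp
  | tmul a b => simp [S'_antipode_apply S' hS'1]
  | add u v hu hv => simp only [map_add, hu, hv]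

include hS'1 hS'2 in
lemma comul_S' :
    (Coalgebra.comul : B →ₗ[K] B ⊗[K] B) ∘ₗ S'
      = (TensorProduct.comm K B B).toLinearMap ∘ₗ TensorProduct.map S' S' ∘ₗ Coalgebra.comul := by
  ext x
  have h := LinearMap.congr_fun (comul_antipode (K := K) (B := B)) (S' x)
  simp only [LinearMap.comp_apply, LinearEquiv.coe_coe] at h ⊢
  rw [antipode_S'_apply S' hS'2] at h
  calc Coalgebra.comul (R := K) (S' x)
      = (TensorProduct.comm K B B) (TensorProduct.map S' S'
          ((TensorProduct.comm K B B) (TensorProduct.map S S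
            (Coalgebra.comul (R := K) (S' x))))) :=
        (comm_mapS'S'_comm_mapSS S' hS'1 _).symm
    _ = (TensorProduct.comm K B B) (TensorProduct.map S' S' (Coalgebra.comul (R := K) x)) := by
        rw [← h]

end InvAntipode


/-! ### The map θ and its coassociativity -/

section Theta

variable (S' : B →ₗ[K] B)

open LinearMap TensorProduct

/-- `θ` without the `Π` precomposition. -/
def thetaMap : B →ₗ[K] B ⊗[K] B :=
  TensorProduct.map (LinearMap.mul' K B ∘ₗ LinearMap.lTensor B S') LinearMap.id ∘ₗ
  (TensorProduct.assoc K B B B).symm.toLinearMap ∘ₗ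
  (TensorProduct.comm K (B ⊗[K] B) B).toLinearMap ∘ₗ
  (LinearMap.rTensor B (Coalgebra.comul : B →ₗ[K] B ⊗[K] B) ∘ₗ
    (Coalgebra.comul : B →ₗ[K] B ⊗[K] B))

/-- Right-nested triple comultiplication. -/
def Dl3 : B →ₗ[K] B ⊗[K] (B ⊗[K] B) :=
  LinearMap.lTensor B (Coalgebra.comul : B →ₗ[K] B ⊗[K] B) ∘ₗ Coalgebra.comul

/-- Right-nested quadruple comultiplication. -/
def Dl4 : B →ₗ[K] B ⊗[K] (B ⊗[K] (B ⊗[K] B)) :=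
  LinearMap.lTensor B (Dl3 : B →ₗ[K] _) ∘ₗ Coalgebra.comul

/-- Right-nested quintuple comultiplication. -/
def Dl5 : B →ₗ[K] B ⊗[K] (B ⊗[K] (B ⊗[K] (B ⊗[K] B))) :=
  LinearMap.lTensor B (Dl4 : B →ₗ[K] _) ∘ₗ Coalgebra.comul

lemma coassoc_rl :
    LinearMap.rTensor B (Coalgebra.comul : B →ₗ[K] B ⊗[K] B) ∘ₗ Coalgebra.comul
      = (TensorProduct.assoc K B B B).symm.toLinearMap ∘ₗ (Dl3 : B →ₗ[K] _) := by
  rw [Dl3, ← LinearMap.comp_assoc]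
  exact Coalgebra.coassoc_symm.symm

/-- Pattern map `a ⊗ (b ⊗ c) ↦ (c * S' a) ⊗ b`. -/
def phiTheta : B ⊗[K] (B ⊗[K] B) →ₗ[K] B ⊗[K] B :=
  TensorProduct.map (LinearMap.mul' K B ∘ₗ LinearMap.lTensor B S') LinearMap.id ∘ₗ
  (TensorProduct.assoc K B B B).symm.toLinearMap ∘ₗ
  (TensorProduct.comm K (B ⊗[K] B) B).toLinearMap ∘ₗ
  (TensorProduct.assoc K B B B).symm.toLinearMap

@[simp] lemma phiTheta_tmul (a b c : B) :
    phiTheta S' (a ⊗ₜ[K] (b ⊗ₜ[K] c)) = (c * S' a) ⊗ₜ[K] b := by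
  simp [phiTheta]

lemma thetaMap_eq : thetaMap S' = phiTheta S' ∘ₗ (Dl3 : B →ₗ[K] _) := by
  unfold thetaMap phiTheta
  rw [coassoc_rl]
  ext x
  simp [LinearMap.comp_apply]

end Theta

section Coassoc5

variable (S' : B →ₗ[K] B)

/-- Naturality of the inverse associator. -/
lemma assoc_symm_nat {M N P M' N' P' : Type} [AddCommGroup M] [AddCommGroup N] [AddCommGroup P]
    [AddCommGroup M'] [AddCommGroup N'] [AddCommGroup P'] [Module K M] [Module K N] [Module K P]
    [Module K M'] [Module K N'] [Module K P']
    (f : M →ₗ[K] M') (g : N →ₗ[K] N') (h : P →ₗ[K] P') :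
    (TensorProduct.assoc K M' N' P').symm.toLinearMap ∘ₗ
        TensorProduct.map f (TensorProduct.map g h)
      = TensorProduct.map (TensorProduct.map f g) h ∘ₗ
          (TensorProduct.assoc K M N P).symm.toLinearMap := by
  apply TensorProduct.ext'
  intro m t
  induction t using TensorProduct.induction_on with
  | zero => simp
  | tmul n p => simp
  | add u v hu hv =>
    simp only [TensorProduct.tmul_add, map_add] at hu hv ⊢
    rw [hu, hv]

lemma alpha5 :
    TensorProduct.map (Coalgebra.comul : B →ₗ[K] B ⊗[K] B) (Dl3 : B →ₗ[K] _) ∘ₗ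
        (Coalgebra.comul : B →ₗ[K] B ⊗[K] B)
      = (TensorProduct.assoc K B B (B ⊗[K] (B ⊗[K] B))).symm.toLinearMap ∘ₗ
          (Dl5 : B →ₗ[K] _) := by
  have h1 : TensorProduct.map (Coalgebra.comul : B →ₗ[K] B ⊗[K] B) (Dl3 : B →ₗ[K] _)
      = LinearMap.lTensor (B ⊗[K] B) (Dl3 : B →ₗ[K] _) ∘ₗ
          LinearMap.rTensor B (Coalgebra.comul : B →ₗ[K] B ⊗[K] B) := by
    rw [LinearMap.lTensor_comp_rTensor]
  rw [h1, LinearMap.comp_assoc, coassoc_rl, ← LinearMap.comp_assoc]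
  have h2 : LinearMap.lTensor (B ⊗[K] B) (Dl3 : B →ₗ[K] _) ∘ₗ
        (TensorProduct.assoc K B B B).symm.toLinearMap
      = (TensorProduct.assoc K B B (B ⊗[K] (B ⊗[K] B))).symm.toLinearMap ∘ₗ
          LinearMap.lTensor B (LinearMap.lTensor B (Dl3 : B →ₗ[K] _)) := by
    have := assoc_symm_nat (K := K) (LinearMap.id : B →ₗ[K] B) (LinearMap.id : B →ₗ[K] B)
      (Dl3 : B →ₗ[K] _)
    simpa [LinearMap.lTensor, TensorProduct.map_id] using this.symm
  rw [h2, LinearMap.comp_assoc]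
  congr 1
  rw [show (Dl3 : B →ₗ[K] _) = LinearMap.lTensor B (Coalgebra.comul : B →ₗ[K] B ⊗[K] B)
      ∘ₗ Coalgebra.comul from rfl, ← LinearMap.comp_assoc, ← LinearMap.lTensor_comp]
  rfl

lemma beta4 :
    TensorProduct.map (Dl3 : B →ₗ[K] _) (LinearMap.id : B →ₗ[K] B) ∘ₗ
        (Coalgebra.comul : B →ₗ[K] B ⊗[K] B)
      = (TensorProduct.assoc K B (B ⊗[K] B) B).symm.toLinearMap ∘ₗ
          LinearMap.lTensor B ((TensorProduct.assoc K B B B).symm.toLinearMap) ∘ₗ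
          (Dl4 : B →ₗ[K] _) := by
  have h1 : TensorProduct.map (Dl3 : B →ₗ[K] _) (LinearMap.id : B →ₗ[K] B)
      = TensorProduct.map (LinearMap.lTensor B (Coalgebra.comul : B →ₗ[K] B ⊗[K] B))
          LinearMap.id ∘ₗ
          LinearMap.rTensor B (Coalgebra.comul : B →ₗ[K] B ⊗[K] B) := by
    rw [show (Dl3 : B →ₗ[K] _) = LinearMap.lTensor B (Coalgebra.comul : B →ₗ[K] B ⊗[K] B)
      ∘ₗ Coalgebra.comul from rfl]
    rw [show (LinearMap.rTensor B (Coalgebra.comul : B →ₗ[K] B ⊗[K] B))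
      = TensorProduct.map (Coalgebra.comul : B →ₗ[K] B ⊗[K] B) LinearMap.id from rfl]
    rw [← TensorProduct.map_comp]
    rfl
  rw [h1, LinearMap.comp_assoc, coassoc_rl, ← LinearMap.comp_assoc]
  have h2 : TensorProduct.map
        (LinearMap.lTensor B (Coalgebra.comul : B →ₗ[K] B ⊗[K] B)) LinearMap.id ∘ₗ
        (TensorProduct.assoc K B B B).symm.toLinearMap
      = (TensorProduct.assoc K B (B ⊗[K] B) B).symm.toLinearMap ∘ₗ
          LinearMap.lTensor B
            (TensorProduct.map (Coalgebra.comul : B →ₗ[K] B ⊗[K] B) LinearMap.id) := by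
    have := assoc_symm_nat (K := K) (LinearMap.id : B →ₗ[K] B)
      (Coalgebra.comul : B →ₗ[K] B ⊗[K] B) (LinearMap.id : B →ₗ[K] B)
    simpa [LinearMap.lTensor] using this.symm
  rw [h2, LinearMap.comp_assoc]
  congr 1
  rw [show (TensorProduct.map (Coalgebra.comul : B →ₗ[K] B ⊗[K] B)
      (LinearMap.id : B →ₗ[K] B)) = LinearMap.rTensor B
      (Coalgebra.comul : B →ₗ[K] B ⊗[K] B) from rfl]
  rw [show (Dl3 : B →ₗ[K] _) = LinearMap.lTensor B (Coalgebra.comul : B →ₗ[K] B ⊗[K] B)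
      ∘ₗ Coalgebra.comul from rfl]
  rw [← LinearMap.comp_assoc, ← LinearMap.lTensor_comp, coassoc_rl]
  rw [show (Dl4 : B →ₗ[K] _) = LinearMap.lTensor B (Dl3 : B →ₗ[K] _)
      ∘ₗ Coalgebra.comul from rfl]
  rw [← LinearMap.comp_assoc, ← LinearMap.lTensor_comp]

lemma beta5 :
    LinearMap.lTensor B (TensorProduct.map (Dl3 : B →ₗ[K] _) (LinearMap.id : B →ₗ[K] B)) ∘ₗ
        (Dl3 : B →ₗ[K] _)
      = LinearMap.lTensor B ((TensorProduct.assoc K B (B ⊗[K] B) B).symm.toLinearMap ∘ₗ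
            LinearMap.lTensor B ((TensorProduct.assoc K B B B).symm.toLinearMap)) ∘ₗ
          (Dl5 : B →ₗ[K] _) := by
  show LinearMap.lTensor B (TensorProduct.map (Dl3 : B →ₗ[K] _) (LinearMap.id : B →ₗ[K] B)) ∘ₗ
        (LinearMap.lTensor B (Coalgebra.comul : B →ₗ[K] B ⊗[K] B) ∘ₗ
          (Coalgebra.comul : B →ₗ[K] B ⊗[K] B))
      = LinearMap.lTensor B ((TensorProduct.assoc K B (B ⊗[K] B) B).symm.toLinearMap ∘ₗ
            LinearMap.lTensor B ((TensorProduct.assoc K B B B).symm.toLinearMap)) ∘ₗ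
          (LinearMap.lTensor B (Dl4 : B →ₗ[K] _) ∘ₗ (Coalgebra.comul : B →ₗ[K] B ⊗[K] B))
  rw [← LinearMap.comp_assoc, ← LinearMap.lTensor_comp, beta4, LinearMap.lTensor_comp,
    LinearMap.lTensor_comp, LinearMap.lTensor_comp]
  simp only [LinearMap.comp_assoc]

end Coassoc5

section PatternMaps

variable (S' : B →ₗ[K] B)

/-- Pattern map `v ⊗ (b ⊗ u) ↦ (u * comm (map S' S' v)) ⊗ b`. -/
def psiMap : (B ⊗[K] B) ⊗[K] (B ⊗[K] (B ⊗[K] B)) →ₗ[K] (B ⊗[K] B) ⊗[K] B :=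
  LinearMap.rTensor B (LinearMap.mul' K (B ⊗[K] B) ∘ₗ
      LinearMap.lTensor (B ⊗[K] B) ((TensorProduct.comm K B B).toLinearMap ∘ₗ
        TensorProduct.map S' S')) ∘ₗ
  (TensorProduct.comm K B ((B ⊗[K] B) ⊗[K] (B ⊗[K] B))).toLinearMap ∘ₗ
  (TensorProduct.assoc K B (B ⊗[K] B) (B ⊗[K] B)).toLinearMap ∘ₗ
  (TensorProduct.comm K (B ⊗[K] B) (B ⊗[K] (B ⊗[K] B))).toLinearMap

@[simp] lemma psiMap_tmul (v u : B ⊗[K] B) (b : B) :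
    psiMap S' (v ⊗ₜ[K] (b ⊗ₜ[K] u))
      = (u * (TensorProduct.comm K B B) (TensorProduct.map S' S' v)) ⊗ₜ[K] b := by
  simp [psiMap]

/-- Pattern map `a ⊗ (t ⊗ c) ↦ (c * S' a) ⊗ t`. -/
def xiMap : B ⊗[K] ((B ⊗[K] B) ⊗[K] B) →ₗ[K] B ⊗[K] (B ⊗[K] B) :=
  LinearMap.rTensor (B ⊗[K] B) (LinearMap.mul' K B ∘ₗ LinearMap.lTensor B S') ∘ₗ
  (TensorProduct.comm K (B ⊗[K] B) (B ⊗[K] B)).toLinearMap ∘ₗ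
  (TensorProduct.assoc K (B ⊗[K] B) B B).toLinearMap ∘ₗ
  (TensorProduct.comm K B ((B ⊗[K] B) ⊗[K] B)).toLinearMap

@[simp] lemma xiMap_tmul (a c : B) (t : B ⊗[K] B) :
    xiMap S' (a ⊗ₜ[K] (t ⊗ₜ[K] c)) = (c * S' a) ⊗ₜ[K] t := by
  simp [xiMap]

/-- Pattern map `u ⊗ (b ⊗ c) ↦ (b ⊗ u) ⊗ c`. -/
def sigmaHat (M : Type) [AddCommGroup M] [Module K M] :
    M ⊗[K] (B ⊗[K] B) →ₗ[K] (B ⊗[K] M) ⊗[K] B :=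
  LinearMap.rTensor B (TensorProduct.comm K M B).toLinearMap ∘ₗ
  (TensorProduct.assoc K M B B).symm.toLinearMap

@[simp] lemma sigmaHat_tmul (M : Type) [AddCommGroup M] [Module K M] (u : M) (b c : B) :
    sigmaHat (B := B) M (u ⊗ₜ[K] (b ⊗ₜ[K] c)) = (b ⊗ₜ[K] u) ⊗ₜ[K] c := by
  simp [sigmaHat]

end PatternMaps

section ThetaCoassoc

variable (S' : B →ₗ[K] B)
variable (hS'1 : S' ∘ₗ (HopfAlgebra.antipode K : B →ₗ[K] B) = LinearMap.id)
variable (hS'2 : (HopfAlgebra.antipode K : B →ₗ[K] B) ∘ₗ S' = LinearMap.id)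

include hS'1 hS'2 in
/-- (L1): pushing a comultiplication through `phiTheta`. -/
lemma rTensor_comul_phiTheta :
    LinearMap.rTensor B (Coalgebra.comul : B →ₗ[K] B ⊗[K] B) ∘ₗ phiTheta S'
      = psiMap S' ∘ₗ TensorProduct.map (Coalgebra.comul : B →ₗ[K] B ⊗[K] B)
          (TensorProduct.map (LinearMap.id : B →ₗ[K] B)
            (Coalgebra.comul : B →ₗ[K] B ⊗[K] B)) := by
  apply TensorProduct.ext'
  intro a t
  induction t using TensorProduct.induction_on with
  | zero => simp
  | tmul b c =>
    simp only [LinearMap.comp_apply, phiTheta_tmul, LinearMap.rTensor_tmul,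
      TensorProduct.map_tmul, psiMap_tmul, LinearMap.id_coe, id_eq]
    rw [Bialgebra.comul_mul]
    congr 1
    have h := LinearMap.congr_fun (comul_S' S' hS'1 hS'2) a
    simp only [LinearMap.comp_apply, LinearEquiv.coe_coe] at h
    rw [h]
  | add u v hu hv =>
    simp only [TensorProduct.tmul_add, map_add] at hu hv ⊢
    rw [hu, hv]

/-- (R1): pushing an arbitrary map `φ` on the second factor through `phiTheta`. -/
lemma lTensor_phiTheta (φ : B →ₗ[K] B ⊗[K] B) :
    LinearMap.lTensor B φ ∘ₗ phiTheta S'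
      = xiMap S' ∘ₗ TensorProduct.map (LinearMap.id : B →ₗ[K] B)
          (TensorProduct.map φ (LinearMap.id : B →ₗ[K] B)) := by
  apply TensorProduct.ext'
  intro a t
  induction t using TensorProduct.induction_on with
  | zero => simp
  | tmul b c => simp
  | add u v hu hv =>
    simp only [TensorProduct.tmul_add, map_add] at hu hv ⊢
    rw [hu, hv]

/-- (γ): the purely combinatorial five-fold identity. -/
lemma gamma5 :
    psiMap S' ∘ₗ (TensorProduct.assoc K B B (B ⊗[K] (B ⊗[K] B))).symm.toLinearMap
      = sigmaHat (B := B) B ∘ₗ xiMap S' ∘ₗ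
          TensorProduct.map (LinearMap.id : B →ₗ[K] B)
            (TensorProduct.map (phiTheta S') (LinearMap.id : B →ₗ[K] B)) ∘ₗ
          LinearMap.lTensor B ((TensorProduct.assoc K B (B ⊗[K] B) B).symm.toLinearMap ∘ₗ
            LinearMap.lTensor B ((TensorProduct.assoc K B B B).symm.toLinearMap)) := by
  apply TensorProduct.ext'
  intro x1 t
  induction t using TensorProduct.induction_on with
  | zero => simp only [TensorProduct.tmul_zero, map_zero]
  | tmul x2 t2 =>
    induction t2 using TensorProduct.induction_on with
    | zero => simp only [TensorProduct.tmul_zero, map_zero]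
    | tmul x3 t3 =>
      induction t3 using TensorProduct.induction_on with
      | zero => simp only [TensorProduct.tmul_zero, map_zero]
      | tmul x4 x5 =>
        simp [Algebra.TensorProduct.tmul_mul_tmul]
      | add u v hu hv =>
        simp only [TensorProduct.tmul_add, map_add] at hu hv ⊢
        rw [hu, hv]
    | add u v hu hv =>
      simp only [TensorProduct.tmul_add, map_add] at hu hv ⊢
      rw [hu, hv]
  | add u v hu hv =>
    simp only [TensorProduct.tmul_add, map_add] at hu hv ⊢
    rw [hu, hv]

end ThetaCoassoc

section ThetaCoassocMain

variable (S' : B →ₗ[K] B)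
variable (hS'1 : S' ∘ₗ (HopfAlgebra.antipode K : B →ₗ[K] B) = LinearMap.id)
variable (hS'2 : (HopfAlgebra.antipode K : B →ₗ[K] B) ∘ₗ S' = LinearMap.id)

include hS'1 hS'2 in
/-- Coassociativity of `θ` (as a coaction of the co-opposite Hopf algebra). -/
lemma thetaCoassoc (x : B) :
    LinearMap.rTensor B (Coalgebra.comul : B →ₗ[K] B ⊗[K] B) (thetaMap S' x)
      = sigmaHat (B := B) B
          (LinearMap.lTensor B (thetaMap S') (thetaMap S' x)) := by
  have e0 : thetaMap S' x = phiTheta S' (Dl3 x) := by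
    rw [thetaMap_eq]; rfl
  rw [e0]
  calc LinearMap.rTensor B (Coalgebra.comul : B →ₗ[K] B ⊗[K] B) (phiTheta S' (Dl3 x))
      = psiMap S' (TensorProduct.map (Coalgebra.comul : B →ₗ[K] B ⊗[K] B)
          (TensorProduct.map LinearMap.id (Coalgebra.comul : B →ₗ[K] B ⊗[K] B))
          (Dl3 x)) := by
        have := LinearMap.congr_fun (rTensor_comul_phiTheta S' hS'1 hS'2) (Dl3 x)
        simpa only [LinearMap.comp_apply] using this
    _ = psiMap S' (TensorProduct.map (Coalgebra.comul : B →ₗ[K] B ⊗[K] B) (Dl3 : B →ₗ[K] _)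
          (Coalgebra.comul (R := K) x)) := by
        congr 1
        rw [show (Dl3 x : B ⊗[K] (B ⊗[K] B))
            = TensorProduct.map LinearMap.id (Coalgebra.comul : B →ₗ[K] B ⊗[K] B)
                (Coalgebra.comul (R := K) x) from rfl,
          ← LinearMap.comp_apply, ← TensorProduct.map_comp, LinearMap.comp_id]
        rfl
    _ = psiMap S' ((TensorProduct.assoc K B B (B ⊗[K] (B ⊗[K] B))).symm (Dl5 x)) := by
        congr 1
        have := LinearMap.congr_fun (alpha5 (K := K) (B := B)) x
        simpa only [LinearMap.comp_apply, LinearEquiv.coe_coe] using this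
    _ = sigmaHat (B := B) B (xiMap S'
          (TensorProduct.map LinearMap.id (TensorProduct.map (phiTheta S') LinearMap.id)
            (LinearMap.lTensor B
              ((TensorProduct.assoc K B (B ⊗[K] B) B).symm.toLinearMap ∘ₗ
                LinearMap.lTensor B ((TensorProduct.assoc K B B B).symm.toLinearMap))
              (Dl5 x)))) := by
        have := LinearMap.congr_fun (gamma5 S') (Dl5 x)
        simpa only [LinearMap.comp_apply, LinearEquiv.coe_coe] using this
    _ = sigmaHat (B := B) B (xiMap S'
          (TensorProduct.map LinearMap.id (TensorProduct.map (phiTheta S') LinearMap.id)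
            (LinearMap.lTensor B
              (TensorProduct.map (Dl3 : B →ₗ[K] _) (LinearMap.id : B →ₗ[K] B))
              (Dl3 x)))) := by
        congr 2
        have := LinearMap.congr_fun (beta5 (K := K) (B := B)) x
        simp only [LinearMap.comp_apply] at this
        rw [← this]
    _ = sigmaHat (B := B) B (xiMap S'
          (TensorProduct.map LinearMap.id
            (TensorProduct.map (thetaMap S') LinearMap.id) (Dl3 x))) := by
        have hmap : TensorProduct.map (LinearMap.id : B →ₗ[K] B)
              (TensorProduct.map (phiTheta S') (LinearMap.id : B →ₗ[K] B)) ∘ₗ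
            TensorProduct.map (LinearMap.id : B →ₗ[K] B)
              (TensorProduct.map (Dl3 : B →ₗ[K] _) (LinearMap.id : B →ₗ[K] B))
            = TensorProduct.map LinearMap.id
                (TensorProduct.map (thetaMap S') LinearMap.id) := by
          rw [← TensorProduct.map_comp, ← TensorProduct.map_comp, thetaMap_eq]
          simp only [LinearMap.id_comp]
        congr 1
        rw [show (LinearMap.lTensor B
              (TensorProduct.map (Dl3 : B →ₗ[K] _) (LinearMap.id : B →ₗ[K] B)) (Dl3 x))
            = TensorProduct.map (LinearMap.id : B →ₗ[K] B)
                (TensorProduct.map (Dl3 : B →ₗ[K] _) (LinearMap.id : B →ₗ[K] B)) (Dl3 x)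
            from rfl]
        rw [← LinearMap.comp_apply (TensorProduct.map (LinearMap.id : B →ₗ[K] B)
            (TensorProduct.map (phiTheta S') (LinearMap.id : B →ₗ[K] B))), hmap]
    _ = sigmaHat (B := B) B (LinearMap.lTensor B (thetaMap S') (phiTheta S' (Dl3 x))) := by
        congr 1
        have := LinearMap.congr_fun (lTensor_phiTheta S' (thetaMap S')) (Dl3 x)
        simp only [LinearMap.comp_apply] at this
        rw [← this]

end ThetaCoassocMain

/-! ### First-order divisibility of the coaction -/

section LemD

variable (S' : B →ₗ[K] B)
variable (hS'1 : S' ∘ₗ (HopfAlgebra.antipode K : B →ₗ[K] B) = LinearMap.id)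
variable (hS'2 : (HopfAlgebra.antipode K : B →ₗ[K] B) ∘ₗ S' = LinearMap.id)
variable (hbar : K)

lemma Dl3_sum (x : B) {ι : Type*} (r : Coalgebra.Repr K x ι) :
    (Dl3 : B →ₗ[K] _) x = ∑ i ∈ r.index, r.left i ⊗ₜ[K] Coalgebra.comul (R := K) (r.right i) := by
  rw [show (Dl3 x : B ⊗[K] (B ⊗[K] B))
      = LinearMap.lTensor B (Coalgebra.comul : B →ₗ[K] B ⊗[K] B) (Coalgebra.comul (R := K) x)
      from rfl, ← r.eq, map_sum]
  simp

include hS'1 hS'2 in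
lemma lemE (x : B) {ι : Type*} (r : Coalgebra.Repr K x ι) :
    ∑ i ∈ r.index, phiTheta S'
        (r.left i ⊗ₜ[K] (TensorProduct.comm K B B) (Coalgebra.comul (R := K) (r.right i)))
      = (1 : B) ⊗ₜ[K] x := by
  have li : ∀ i, Coalgebra.Repr K (r.left i) (B × B) := fun i => Coalgebra.Repr.arbitrary K _
  have ri : ∀ i, Coalgebra.Repr K (r.right i) (B × B) := fun i => Coalgebra.Repr.arbitrary K _
  set Lam : B ⊗[K] (B ⊗[K] B) →ₗ[K] B ⊗[K] B :=
    phiTheta S' ∘ₗ LinearMap.lTensor B (TensorProduct.comm K B B).toLinearMap with hLam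
  have hLam_tmul : ∀ (a b c : B), Lam (a ⊗ₜ[K] (b ⊗ₜ[K] c)) = (b * S' a) ⊗ₜ[K] c := by
    intro a b c; simp [hLam]
  have key := congrArg (Lam : B ⊗[K] (B ⊗[K] B) →ₗ[K] B ⊗[K] B)
    (Coalgebra.sum_tmul_tmul_eq r li ri)
  simp only [map_sum] at key
  have lhs_eq : ∑ i ∈ r.index,
      phiTheta S' (r.left i ⊗ₜ[K]
        (TensorProduct.comm K B B) (Coalgebra.comul (R := K) (r.right i)))
      = ∑ i ∈ r.index, ∑ j ∈ (ri i).index,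
          Lam (r.left i ⊗ₜ[K] ((ri i).left j ⊗ₜ[K] (ri i).right j)) := by
    refine Finset.sum_congr rfl fun i _ => ?_
    rw [← (ri i).eq]
    simp [hLam, TensorProduct.tmul_sum, map_sum]
  rw [lhs_eq, ← key]
  have collapse : ∀ i ∈ r.index, ∑ j ∈ (li i).index,
      Lam ((li i).left j ⊗ₜ[K] ((li i).right j ⊗ₜ[K] r.right i))
      = Coalgebra.counit (R := K) (r.left i) • ((1 : B) ⊗ₜ[K] r.right i) := by
    intro i _
    simp only [hLam_tmul]
    rw [← TensorProduct.sum_tmul, K1r S' hS'1 hS'2 (li i), Algebra.algebraMap_eq_smul_one,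
      TensorProduct.smul_tmul']
  rw [Finset.sum_congr rfl collapse]
  have : ∀ i ∈ r.index, Coalgebra.counit (R := K) (r.left i) • ((1 : B) ⊗ₜ[K] r.right i)
      = (1 : B) ⊗ₜ[K] (Coalgebra.counit (R := K) (r.left i) • r.right i) := by
    intro i _; rw [TensorProduct.tmul_smul]
  rw [Finset.sum_congr rfl this, ← TensorProduct.tmul_sum, sum_counit_smul r]

include hS'1 hS'2 in
lemma thetaMap_one_add (hΔ : ∀ z : B, ∃ y : B ⊗[K] B,
      Coalgebra.comul (R := K) z -
        (TensorProduct.comm K B B).toLinearMap (Coalgebra.comul (R := K) z) = hbar • y)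
    (x : B) :
    ∃ y : B ⊗[K] B, thetaMap S' x = (1 : B) ⊗ₜ[K] x + hbar • y := by
  have r := Coalgebra.Repr.arbitrary K x
  choose yy hyy using hΔ
  refine ⟨∑ i ∈ r.index, phiTheta S' (r.left i ⊗ₜ[K] yy (r.right i)), ?_⟩
  have e0 : thetaMap S' x = phiTheta S' (Dl3 x) := by rw [thetaMap_eq]; rfl
  rw [e0, Dl3_sum x r, map_sum]
  have split : ∀ i ∈ r.index,
      phiTheta S' (r.left i ⊗ₜ[K] Coalgebra.comul (R := K) (r.right i))
      = phiTheta S' (r.left i ⊗ₜ[K]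
          (TensorProduct.comm K B B) (Coalgebra.comul (R := K) (r.right i)))
        + hbar • phiTheta S' (r.left i ⊗ₜ[K] yy (r.right i)) := by
    intro i _
    have h := hyy (r.right i)
    have hc : Coalgebra.comul (R := K) (r.right i)
        = (TensorProduct.comm K B B).toLinearMap (Coalgebra.comul (R := K) (r.right i))
          + hbar • yy (r.right i) := by
      rw [← h]; abel
    nth_rewrite 1 [hc]
    rw [TensorProduct.tmul_add, map_add, TensorProduct.tmul_smul, map_smul]
    rfl
  rw [Finset.sum_congr rfl split, Finset.sum_add_distrib, lemE S' hS'1 hS'2 x r,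
    ← Finset.smul_sum]

lemma pProj_one : pProj K B 1 = 0 := by
  simp [pProj, Bialgebra.counit_one]

include hS'1 hS'2 in
lemma lemD (hΔ : ∀ z : B, ∃ y : B ⊗[K] B,
      Coalgebra.comul (R := K) z -
        (TensorProduct.comm K B B).toLinearMap (Coalgebra.comul (R := K) z) = hbar • y)
    (x : B) :
    ∃ y : B ⊗[K] B, LinearMap.rTensor B (pProj K B) (thetaMap S' x) = hbar • y := by
  obtain ⟨z, hz⟩ := thetaMap_one_add S' hS'1 hS'2 hbar hΔ x
  refine ⟨LinearMap.rTensor B (pProj K B) z, ?_⟩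
  rw [hz, map_add, map_smul, LinearMap.rTensor_tmul, pProj_one, TensorProduct.zero_tmul,
    zero_add]

lemma lTensor_hbar {M : Type} [AddCommGroup M] [Module K M] (f : B →ₗ[K] B ⊗[K] B)
    (hf : ∀ b : B, ∃ y, f b = hbar • y) (t : M ⊗[K] B) :
    ∃ z, LinearMap.lTensor M f t = hbar • z := by
  induction t using TensorProduct.induction_on with
  | zero => exact ⟨0, by simp⟩
  | tmul m b =>
    obtain ⟨y, hy⟩ := hf b
    exact ⟨m ⊗ₜ[K] y, by rw [LinearMap.lTensor_tmul, hy, TensorProduct.tmul_smul]⟩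
  | add u v hu hv =>
    obtain ⟨zu, hzu⟩ := hu
    obtain ⟨zv, hzv⟩ := hv
    exact ⟨zu + zv, by rw [map_add, hzu, hzv, smul_add]⟩

end LemD

/-! ### The master induction -/

section Master

variable (S' : B →ₗ[K] B)
variable (hS'1 : S' ∘ₗ (HopfAlgebra.antipode K : B →ₗ[K] B) = LinearMap.id)
variable (hS'2 : (HopfAlgebra.antipode K : B →ₗ[K] B) ∘ₗ S' = LinearMap.id)
variable (hbar : K)

lemma dIter_zero : dIter K B 0 = pProj K B := LinearMap.comp_id _

lemma dIter_succ (n : ℕ) :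
    dIter K B (n + 1)
      = TensorProduct.map (pProj K B) (dIter K B n) ∘ₗ
          (Coalgebra.comul : B →ₗ[K] B ⊗[K] B) := by
  show TensorProduct.map (pProj K B) (pProjIter K B n) ∘ₗ
      (LinearMap.lTensor B (DeltaIter K B n) ∘ₗ (Coalgebra.comul : B →ₗ[K] B ⊗[K] B)) = _
  rw [← LinearMap.comp_assoc]
  congr 1
  rw [show LinearMap.lTensor B (DeltaIter K B n)
      = TensorProduct.map LinearMap.id (DeltaIter K B n) from rfl, ← TensorProduct.map_comp]
  rw [LinearMap.comp_id]
  rfl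

lemma rTensor_map_sigmaHat (n : ℕ) :
    LinearMap.rTensor B (TensorProduct.map (pProj K B) (dIter K B n)) ∘ₗ
        sigmaHat (B := B) B
      = sigmaHat (B := B) (Tn K B n).carrier ∘ₗ
          TensorProduct.map (dIter K B n) (LinearMap.rTensor B (pProj K B)) := by
  apply TensorProduct.ext'
  intro a t
  induction t using TensorProduct.induction_on with
  | zero => simp only [TensorProduct.tmul_zero, map_zero]
  | tmul b c => simp
  | add u v hu hv =>
    simp only [TensorProduct.tmul_add, map_add] at hu hv ⊢
    rw [hu, hv]

lemma map_swap (n : ℕ) :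
    TensorProduct.map (dIter K B n) (LinearMap.rTensor B (pProj K B)) ∘ₗ
        LinearMap.lTensor B (thetaMap S')
      = LinearMap.lTensor (Tn K B n).carrier
          (LinearMap.rTensor B (pProj K B) ∘ₗ thetaMap S') ∘ₗ
        LinearMap.rTensor B (dIter K B n) := by
  apply TensorProduct.ext'
  intro a b
  simp

include hS'1 hS'2 in
lemma mainInd (hΔ : ∀ z : B, ∃ y : B ⊗[K] B,
      Coalgebra.comul (R := K) z -
        (TensorProduct.comm K B B).toLinearMap (Coalgebra.comul (R := K) z) = hbar • y) :
    ∀ (n : ℕ) (x : B), ∃ y : (Tn K B n).carrier ⊗[K] B,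
      LinearMap.rTensor B (dIter K B n) (thetaMap S' x) = hbar ^ (n + 1) • y := by
  intro n
  induction n with
  | zero =>
    intro x
    obtain ⟨y, hy⟩ := lemD S' hS'1 hS'2 hbar hΔ x
    exact ⟨y, by rw [dIter_zero, zero_add, pow_one]; exact hy⟩
  | succ n ih =>
    intro x
    obtain ⟨y, hy⟩ := ih x
    obtain ⟨z, hz⟩ := lTensor_hbar hbar (LinearMap.rTensor B (pProj K B) ∘ₗ thetaMap S')
      (fun b => lemD S' hS'1 hS'2 hbar hΔ b) y
    refine ⟨sigmaHat (B := B) (Tn K B n).carrier z, ?_⟩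
    have step1 : LinearMap.rTensor B (dIter K B (n + 1)) (thetaMap S' x)
        = LinearMap.rTensor B (TensorProduct.map (pProj K B) (dIter K B n))
            (LinearMap.rTensor B (Coalgebra.comul : B →ₗ[K] B ⊗[K] B) (thetaMap S' x)) := by
      rw [dIter_succ]; refine (LinearMap.congr_fun (LinearMap.rTensor_comp _ _ _) _).trans ?_
      rfl
    rw [step1, thetaCoassoc S' hS'1 hS'2 x]
    have step2 := LinearMap.congr_fun (rTensor_map_sigmaHat (K := K) (B := B) n)
      (LinearMap.lTensor B (thetaMap S') (thetaMap S' x))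
    simp only [LinearMap.comp_apply] at step2
    rw [step2]
    have step3 := LinearMap.congr_fun (map_swap S' n) (thetaMap S' x)
    simp only [LinearMap.comp_apply] at step3
    rw [step3, hy, map_smul, hz, map_smul, map_smul, smul_smul, ← pow_succ]
    rfl

end Master

end Stmt12Aux


section SplitPair

/-- Let `K = k[[ℏ]]` and `(A, B, i, p)` a split pair of Hopf algebras over
`K` with invertible antipode such that the image of `Δ − (1 2)∘Δ` is contained in `ℏ·(B ⊗ B)`.
Then for every `x ∈ L = Π(B)`, `((id − ι∘ε) ⊗ id)(π_L*(x)) ∈ ℏ·(B ⊗ B)`; hence, by the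
admissibility criterion, the coaction on `L` factors through `B′ ⊗ L`, i.e. `L` is an
admissible Drinfeld–Yetter `B`-module. -/
theorem statement12 {k : Type} [Field k] [CharZero k]
    {A B : Type} [Ring A] [Ring B]
    [HopfAlgebra (PowerSeries k) A] [HopfAlgebra (PowerSeries k) B]
    (i : A →ₐc[PowerSeries k] B) (p : B →ₐc[PowerSeries k] A)
    (hsplit : ∀ a : A, p (i a) = a)
    (S' : B →ₗ[PowerSeries k] B)
    (hS'₁ : S' ∘ₗ (HopfAlgebra.antipode (PowerSeries k) : B →ₗ[PowerSeries k] B) = LinearMap.id)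
    (hS'₂ : (HopfAlgebra.antipode (PowerSeries k) : B →ₗ[PowerSeries k] B) ∘ₗ S' = LinearMap.id)
    (hΔ : ∀ x : B, ∃ y : B ⊗[PowerSeries k] B,
      Coalgebra.comul (R := PowerSeries k) x -
          (TensorProduct.comm (PowerSeries k) B B).toLinearMap
            (Coalgebra.comul (R := PowerSeries k) x) =
        (PowerSeries.X : PowerSeries k) • y) :
    -- `((id − ι∘ε) ⊗ id)(π_L*(x)) ∈ ℏ·(B ⊗ B)` for every `x ∈ L`
    (∀ x : B, PiMap i p x = x →
      ∃ y : B ⊗[PowerSeries k] B,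
        LinearMap.rTensor B (pProj (PowerSeries k) B) (theta i p S' x) =
          (PowerSeries.X : PowerSeries k) • y) ∧
    -- hence the coaction on `L` factors through `B′ ⊗ L`: `L` is admissible
    (∀ x : B, PiMap i p x = x →
      ∀ n : ℕ, ∃ y : (Tn (PowerSeries k) B n).carrier ⊗[PowerSeries k] B,
        LinearMap.rTensor B (dIter (PowerSeries k) B n) (theta i p S' x) =
          (PowerSeries.X : PowerSeries k) ^ (n + 1) • y) := by
  have hthetaEq : ∀ x : B, PiMap i p x = x →
      theta i p S' x = Stmt12Aux.thetaMap S' x := by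
    intro x hx
    have h0 : theta i p S' x = Stmt12Aux.thetaMap S' (PiMap i p x) := rfl
    rw [h0, hx]
  constructor
  · intro x hx
    rw [hthetaEq x hx]
    exact Stmt12Aux.lemD S' hS'₁ hS'₂ PowerSeries.X hΔ x
  · intro x hx n
    rw [hthetaEq x hx]
    exact Stmt12Aux.mainInd S' hS'₁ hS'₂ PowerSeries.X hΔ n x

end SplitPair
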